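/- arXiv:2208.03645 — 2 statements merged into one kernel-verified Lean document; each statement's English description precedes it below -/
import Mathlib

section
/- Let p, q, k > 0 and define f : ℝ → ℝ by f(x) = -p·log(σ(x)) - k·q·log(1 - σ(x)), where σ is the logistic sigmoid. Then f attains its unique global minimum at x* = log(p/(k·q)). -/
lemma key_strict (p d t t0 : ℝ) (hp : 0 < p) (hd : 0 < d)
    (ht0 : 0 < t) (ht1 : t < 1) (ht0def : t0 = p / (p + d)) (hne : t ≠ t0) :
    -p * Real.log t0 - d * Real.log (1 - t0) < -p * Real.log t - d * Real.log (1 - t) := by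
  have hpd : 0 < p + d := by linarith
  have h0 : 0 < t0 := ht0def ▸ div_pos hp hpd
  have h1 : t0 < 1 := by rw [ht0def, div_lt_one hpd]; linarith
  have h1t : 0 < 1 - t := by linarith
  have h1t0 : 0 < 1 - t0 := by linarith
  have hne1 : t / t0 ≠ 1 := by
    intro h; apply hne
    field_simp at h; linarith
  have hne2 : (1 - t) / (1 - t0) ≠ 1 := by
    intro h; apply hne
    field_simp at h; linarith
  have ha : Real.log (t / t0) < t / t0 - 1 :=
    Real.log_lt_sub_one_of_pos (div_pos ht0 h0) hne1
  have hb : Real.log ((1 - t) / (1 - t0)) < (1 - t) / (1 - t0) - 1 :=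
    Real.log_lt_sub_one_of_pos (div_pos h1t h1t0) hne2
  have hzero : p * (t / t0 - 1) + d * ((1 - t) / (1 - t0) - 1) = 0 := by
    rw [ht0def]; field_simp [hd.ne']; ring
  rw [Real.log_div (ne_of_gt ht0) (ne_of_gt h0)] at ha
  rw [Real.log_div (ne_of_gt h1t) (ne_of_gt h1t0)] at hb
  nlinarith [mul_lt_mul_of_pos_left ha hp, mul_lt_mul_of_pos_left hb hd]

/-- The pointwise NCE objective `f(x) = -p·log σ(x) - k·q·log(1-σ(x))` attains its
unique global minimum at `x* = log(p/(k·q))`. -/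
theorem stmt_1 (σ : ℝ → ℝ) (hσ : ∀ x, σ x = 1 / (1 + Real.exp (-x)))
    (p q k : ℝ) (hp : 0 < p) (hq : 0 < q) (hk : 0 < k)
    (f : ℝ → ℝ) (hf : ∀ x, f x = -p * Real.log (σ x) - k * q * Real.log (1 - σ x)) :
    (∀ x, f (Real.log (p / (k * q))) ≤ f x) ∧
    (∀ x, f x = f (Real.log (p / (k * q))) → x = Real.log (p / (k * q))) := by
  set d := k * q with hd_def
  have hd : 0 < d := mul_pos hk hq
  set x0 := Real.log (p / d) with hx0
  set t0 : ℝ := p / (p + d) with ht0def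
  have hpd : 0 < p + d := by linarith
  -- σ is in (0,1)
  have hσpos : ∀ x, 0 < σ x := by
    intro x; rw [hσ]
    positivity
  have hσlt : ∀ x, σ x < 1 := by
    intro x; rw [hσ]
    have h := Real.exp_pos (-x)
    rw [div_lt_one (by linarith)]; linarith
  -- σ x0 = t0
  have hσ0 : σ x0 = t0 := by
    rw [hσ, hx0, Real.exp_neg, Real.exp_log (div_pos hp hd), ht0def]
    rw [inv_div]
    field_simp
  -- σ injective
  have hinj : ∀ x y, σ x = σ y → x = y := by
    intro x y h
    rw [hσ, hσ] at h
    have h1 : (0:ℝ) < 1 + Real.exp (-x) := by positivity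
    have h2 : (0:ℝ) < 1 + Real.exp (-y) := by positivity
    rw [one_div, one_div, inv_inj] at h
    have h2 : Real.exp (-x) = Real.exp (-y) := by linarith
    have := Real.exp_injective h2
    linarith
  constructor
  · intro x
    rcases eq_or_ne (σ x) t0 with h | h
    · rw [hf, hf, hσ0, h]
    · have := key_strict p d (σ x) t0 hp hd (hσpos x) (hσlt x) ht0def h
      rw [hf, hf, hσ0]
      linarith
  · intro x hx
    by_contra hne
    have hσne : σ x ≠ t0 := fun h => hne (hinj x x0 (h.trans hσ0.symm))
    have := key_strict p d (σ x) t0 hp hd (hσpos x) (hσlt x) ht0def hσne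
    rw [hf, hf, hσ0] at hx
    linarith
end

section
/- Let n ≥ 2, and let p = (p_1,…,p_n) be a probability vector with all p_i > 0. For α ≥ 0 define the escort distribution p^{(α)}_i = p_i^α / Σ_j p_j^α. Then the map α ↦ max_i p^{(α)}_i is monotone nondecreasing on [0, ∞). -/
open Finset in
/-- For a positive probability vector `p` on `Fin n` (`n ≥ 2`), the maximal mass of
the escort distribution `p^{(α)}_i = p_i^α / Σ_j p_j^α` is nondecreasing in `α ≥ 0`. -/
theorem stmt_19 (n : ℕ) (hn : 2 ≤ n) (p : Fin n → ℝ)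
    (hpos : ∀ i, 0 < p i) (hsum : ∑ i, p i = 1)
    (P : ℝ → Fin n → ℝ)
    (hP : ∀ α i, P α i = (p i) ^ α / ∑ j, (p j) ^ α) :
    MonotoneOn (fun α => ⨆ i, P α i) (Set.Ici (0:ℝ)) := by
  haveI : Nonempty (Fin n) := ⟨⟨0, by omega⟩⟩
  obtain ⟨i₀, hi₀⟩ := Finite.exists_max p
  have hS : ∀ α : ℝ, 0 < ∑ j, (p j) ^ α := fun α =>
    Finset.sum_pos (fun j _ => Real.rpow_pos_of_pos (hpos j) α) Finset.univ_nonempty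
  have key : ∀ α : ℝ, 0 ≤ α → (⨆ i, P α i) = P α i₀ := by
    intro α hα
    apply le_antisymm
    · apply ciSup_le
      intro j
      rw [hP, hP]
      gcongr
      · exact (hS α).le
      · exact (hpos j).le
      · exact hi₀ j
    · exact le_ciSup (Set.Finite.bddAbove (Set.finite_range _)) i₀
  intro a ha b hb hab
  simp only [Set.mem_Ici] at ha hb
  show (⨆ i, P a i) ≤ ⨆ i, P b i
  rw [key a ha, key b hb, hP, hP]
  rw [div_le_div_iff₀ (hS a) (hS b), Finset.mul_sum, Finset.mul_sum]
  apply Finset.sum_le_sum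
  intro j _
  have h1 : p j ^ b = p j ^ a * p j ^ (b - a) := by
    rw [← Real.rpow_add (hpos j)]; ring_nf
  have h2 : p i₀ ^ b = p i₀ ^ a * p i₀ ^ (b - a) := by
    rw [← Real.rpow_add (hpos i₀)]; ring_nf
  have h3 : p j ^ (b - a) ≤ p i₀ ^ (b - a) :=
    Real.rpow_le_rpow (hpos j).le (hi₀ j) (sub_nonneg.2 hab)
  have h4 : 0 < p i₀ ^ a * p j ^ a :=
    mul_pos (Real.rpow_pos_of_pos (hpos i₀) a) (Real.rpow_pos_of_pos (hpos j) a)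
  rw [h1, h2]
  nlinarith [h4, h3]
end
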